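/- Let K be a field with char(K) ≠ 2 and let t ∈ K satisfy t(t^2 + 27)(t^2 + 243)(t^2 + 3)(t^4 − 10t^2 + 729) ≠ 0. Then the polynomial 16t^3·x^6 + (t^4 + 16t^3 − 126t^2 + 648t − 2187)·x^4 + (t^4 − 8t^3 + 42t^2 − 144t − 243)·x^2 − 16t ∈ K[x] is a separable (squarefree) polynomial of degree 6. -/

import Mathlib

open Polynomial

set_option maxHeartbeats 4000000 in
/-- For `char K ≠ 2` and `t(t² + 27)(t² + 243)(t² + 3)(t⁴ − 10t² + 729) ≠ 0`,
the sextic defining the curve `Cₜ` of Theorem 1 is squarefree of degree `6`. -/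
theorem stmt_12 {K : Type*} [Field K] (hchar : ringChar K ≠ 2) (t : K)
    (ht : t * (t ^ 2 + 27) * (t ^ 2 + 243) * (t ^ 2 + 3) * (t ^ 4 - 10 * t ^ 2 + 729) ≠ 0) :
    Squarefree (C (16 * t ^ 3) * X ^ 6 +
        C (t ^ 4 + 16 * t ^ 3 - 126 * t ^ 2 + 648 * t - 2187) * X ^ 4 +
        C (t ^ 4 - 8 * t ^ 3 + 42 * t ^ 2 - 144 * t - 243) * X ^ 2 - C (16 * t) : K[X]) ∧
      (C (16 * t ^ 3) * X ^ 6 +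
        C (t ^ 4 + 16 * t ^ 3 - 126 * t ^ 2 + 648 * t - 2187) * X ^ 4 +
        C (t ^ 4 - 8 * t ^ 3 + 42 * t ^ 2 - 144 * t - 243) * X ^ 2 -
          C (16 * t) : K[X]).natDegree = 6 := by
  have h2 : (2 : K) ≠ 0 := by
    intro h
    have hd : ringChar K ∣ 2 := (ringChar.spec K 2).mp (by exact_mod_cast h)
    rcases (Nat.dvd_prime Nat.prime_two).mp hd with h1 | h1
    · exact CharP.ringChar_ne_one h1
    · exact hchar h1
  have h16 : (16 : K) ≠ 0 := by
    intro h; apply pow_ne_zero 4 h2; rw [show (2:K)^4 = 16 by norm_num, h]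
  have ht0 : t ≠ 0 := fun h => ht (by rw [h]; ring)
  have h27 : t ^ 2 + 27 ≠ 0 := fun h => ht (by rw [h]; ring)
  have h729 : t ^ 4 - 10 * t ^ 2 + 729 ≠ 0 := fun h => ht (by rw [h]; ring)
  have hq : t ^ 2 - 8 * t + 27 ≠ 0 := fun h =>
    h729 (by linear_combination (t ^ 2 + 8 * t + 27) * h)
  set R : K := -16 * t ^ 3 * (t ^ 2 + 27) ^ 2 * (t ^ 2 - 8 * t + 27) ^ 6 with hRdef
  have hR : R ≠ 0 := by
    apply mul_ne_zero (mul_ne_zero (mul_ne_zero _ (pow_ne_zero 3 ht0)) (pow_ne_zero 2 h27))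
      (pow_ne_zero 6 hq)
    intro h; apply h16; linear_combination -h
  set g : K[X] := C (16 * t ^ 3) * X ^ 3 +
      C (t ^ 4 + 16 * t ^ 3 - 126 * t ^ 2 + 648 * t - 2187) * X ^ 2 +
      C (t ^ 4 - 8 * t ^ 3 + 42 * t ^ 2 - 144 * t - 243) * X - C (16 * t) with hg
  have hd : derivative g = C (48 * t ^ 3) * X ^ 2 +
      C (2 * (t ^ 4 + 16 * t ^ 3 - 126 * t ^ 2 + 648 * t - 2187)) * X +
      C (t ^ 4 - 8 * t ^ 3 + 42 * t ^ 2 - 144 * t - 243) := by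
    rw [hg]
    simp only [derivative_add, derivative_sub, derivative_C_mul, derivative_X_pow,
      derivative_X, derivative_C, Nat.cast_ofNat, mul_one]
    simp only [map_mul, map_add, map_sub, map_pow, map_ofNat]
    push_cast
    ring
  have key : (((1536) * C t ^ 14 + (-24576) * C t ^ 13 + (595968) * C t ^ 12 + (-7299072) * C t ^ 11 + (60134400) * C t ^ 10 + (-340402176) * C t ^ 9 + (1491499008) * C t ^ 8 + (-4353564672) * C t ^ 7 + (7346640384) * C t ^ 6) * X + ((64) * C t ^ 15 + (-768) * C t ^ 14 + (-5760) * C t ^ 13 + (426496) * C t ^ 12 + (-7970112) * C t ^ 11 + (92468736) * C t ^ 10 + (-777164544) * C t ^ 9 + (5007495168) * C t ^ 8 + (-25218174528) * C t ^ 7 + (98635449600) * C t ^ 6 + (-292028955264) * C t ^ 5 + (595077871104) * C t ^ 4 + (-669462604992) * C t ^ 3)) * g + (((-512) * C t ^ 14 + (8192) * C t ^ 13 + (-198656) * C t ^ 12 + (2433024) * C t ^ 11 + (-20044800) * C t ^ 10 + (113467392) * C t ^ 9 + (-497166336) * C t ^ 8 + (1451188224) * C t ^ 7 + (-2448880128)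 * C t ^ 6) * X ^ 2 + ((-32) * C t ^ 15 + (256) * C t ^ 14 + (1856) * C t ^ 13 + (-186112) * C t ^ 12 + (3705504) * C t ^ 11 + (-44582400) * C t ^ 10 + (381034368) * C t ^ 9 + (-2483965440) * C t ^ 8 + (12588931872) * C t ^ 7 + (-49385749248) * C t ^ 6 + (146014477632) * C t ^ 5 + (-297538935552) * C t ^ 4 + (334731302496) * C t ^ 3) * X + ((-16) * C t ^ 15 + (640) * C t ^ 14 + (-13024) * C t ^ 13 + (176640) * C t ^ 12 + (-1761840) * C t ^ 11 + (13695744) * C t ^ 10 + (-83301696) * C t ^ 9 + (398338560) * C t ^ 8 + (-1459201392) * C t ^ 7 + (3907626624) * C t ^ 6 + (-5969145312) * C t ^ 5 + (18596183472) * C t ^ 3)) * derivative g = C R := by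
    rw [hd, hg, hRdef]
    simp only [map_mul, map_add, map_sub, map_pow, map_ofNat, map_neg]
    ring
  have hcop : IsCoprime g (derivative g) := by
    refine ⟨C R⁻¹ * (((1536) * C t ^ 14 + (-24576) * C t ^ 13 + (595968) * C t ^ 12 + (-7299072) * C t ^ 11 + (60134400) * C t ^ 10 + (-340402176) * C t ^ 9 + (1491499008) * C t ^ 8 + (-4353564672) * C t ^ 7 + (7346640384) * C t ^ 6) * X + ((64) * C t ^ 15 + (-768) * C t ^ 14 + (-5760) * C t ^ 13 + (426496) * C t ^ 12 + (-7970112) * C t ^ 11 + (92468736) * C t ^ 10 + (-777164544) * C t ^ 9 + (5007495168) * C t ^ 8 + (-25218174528) * C t ^ 7 + (98635449600) * C t ^ 6 + (-292028955264) * C t ^ 5 + (595077871104) * C t ^ 4 + (-669462604992) * C t ^ 3)), C R⁻¹ * (((-512) * C t ^ 14 + (8192) * C t ^ 13 + (-198656) * C t ^ 12 + (2433024) * C t ^ 11 + (-20044800) * C t ^ 10 + (113467392) * C t ^ 9 + (-497166336) * C t ^ 8 + (1451188224) * C t ^ 7 + (-2448880128) * C t ^ 6) * X ^ 2 + ((-32)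 * C t ^ 15 + (256) * C t ^ 14 + (1856) * C t ^ 13 + (-186112) * C t ^ 12 + (3705504) * C t ^ 11 + (-44582400) * C t ^ 10 + (381034368) * C t ^ 9 + (-2483965440) * C t ^ 8 + (12588931872) * C t ^ 7 + (-49385749248) * C t ^ 6 + (146014477632) * C t ^ 5 + (-297538935552) * C t ^ 4 + (334731302496) * C t ^ 3) * X + ((-16) * C t ^ 15 + (640) * C t ^ 14 + (-13024) * C t ^ 13 + (176640) * C t ^ 12 + (-1761840) * C t ^ 11 + (13695744) * C t ^ 10 + (-83301696) * C t ^ 9 + (398338560) * C t ^ 8 + (-1459201392) * C t ^ 7 + (3907626624) * C t ^ 6 + (-5969145312) * C t ^ 5 + (18596183472) * C t ^ 3)), ?_⟩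
    rw [mul_assoc, mul_assoc, ← mul_add, key, ← C_mul, inv_mul_cancel₀ hR, C_1]
  have hcop2 : IsCoprime (g.comp (X ^ 2)) ((derivative g).comp (X ^ 2)) := by
    have := hcop.map (eval₂RingHom (C : K →+* K[X]) (X ^ 2))
    simp only [coe_eval₂RingHom] at this
    exact this
  set f : K[X] := C (16 * t ^ 3) * X ^ 6 +
      C (t ^ 4 + 16 * t ^ 3 - 126 * t ^ 2 + 648 * t - 2187) * X ^ 4 +
      C (t ^ 4 - 8 * t ^ 3 + 42 * t ^ 2 - 144 * t - 243) * X ^ 2 - C (16 * t) with hf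
  have hfg : f = g.comp (X ^ 2) := by
    rw [hf, hg]
    simp only [add_comp, sub_comp, mul_comp, C_comp, X_comp, pow_comp]
    ring
  have hc0 : f.coeff 0 = -(16 * t) := by
    rw [hf]
    simp [coeff_one]
  have hXf : IsCoprime f (X : K[X]) := by
    have h0 : f.coeff 0 ≠ 0 := by
      rw [hc0]
      exact neg_ne_zero.mpr (mul_ne_zero h16 ht0)
    refine ⟨C (f.coeff 0)⁻¹, -(C (f.coeff 0)⁻¹ * f.divX), ?_⟩
    have hdvx : X * f.divX + C (f.coeff 0) = f := X_mul_divX_add f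
    have hCe : C (f.coeff 0)⁻¹ * C (f.coeff 0) = 1 := by
      rw [← C_mul, inv_mul_cancel₀ h0, C_1]
    linear_combination (-(C (f.coeff 0)⁻¹)) * hdvx + hCe
  have hC2f : IsCoprime f (C (2 : K)) := by
    refine ⟨0, C (2 : K)⁻¹, ?_⟩
    rw [zero_mul, zero_add, ← C_mul, inv_mul_cancel₀ h2, C_1]
  have hdf : derivative f = (C (2 : K) * X) * ((derivative g).comp (X ^ 2)) := by
    rw [hfg, derivative_comp, derivative_X_pow]
    push_cast
    ring
  have hsep : f.Separable := by
    rw [Polynomial.separable_def, hdf]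
    exact (hC2f.mul_right hXf).mul_right (hfg ▸ hcop2)
  constructor
  · exact hsep.squarefree
  · have h63 : 16 * t ^ 3 ≠ 0 := mul_ne_zero h16 (pow_ne_zero 3 ht0)
    rw [hf]
    compute_degree!
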